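/- Let (s_n), (c_n) be sequences of nonnegative reals and (a_n) ⊆ [0,1] with s_{n+1} ≤ (1 − a_n)s_n + c_n for all n. Suppose L ∈ ℕ* bounds (s_n), ∑ c_n converges with Cauchy modulus χ, and A : ℕ × ℕ → ℕ satisfies A(m,k) ≥ m and ∏_{i=m}^{A(m,k)}(1 − a_i) ≤ 1/(k+1) for all m, k. Then lim s_n = 0 with rate of convergence Σ*(k) = A(χ(2k+1)+1, 2L(k+1) − 1) + 1, i.e., s_n ≤ 1/(k+1) for all n ≥ Σ*(k). -/

import Mathlib

theorem stmt_11 (s c : ℕ → ℝ) (hs : ∀ n, 0 ≤ s n) (hc : ∀ n, 0 ≤ c n)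
    (a : ℕ → ℝ) (ha : ∀ n, a n ∈ Set.Icc (0:ℝ) 1)
    (hrec : ∀ n, s (n + 1) ≤ (1 - a n) * s n + c n)
    (L : ℕ) (hL : 1 ≤ L) (hLb : ∀ n, s n ≤ L)
    (hcsum : Summable c)
    (χ : ℕ → ℕ)
    (hχ : ∀ k n, χ k ≤ n → ∀ l : ℕ, 1 ≤ l →
      ∑ i ∈ Finset.Icc (n + 1) (n + l), c i ≤ 1 / (k + 1))
    (A : ℕ → ℕ → ℕ)
    (hA : ∀ m k, m ≤ A m k ∧ ∏ i ∈ Finset.Icc m (A m k), (1 - a i) ≤ 1 / (k + 1)) :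
    ∀ k n, A (χ (2 * k + 1) + 1) (2 * L * (k + 1) - 1) + 1 ≤ n →
      s n ≤ 1 / (k + 1) := by
  have hfac : ∀ i, 0 ≤ 1 - a i ∧ 1 - a i ≤ 1 := by
    intro i
    obtain ⟨h1, h2⟩ := ha i
    constructor <;> linarith
  -- key unfolding lemma
  have key : ∀ m n, m ≤ n →
      s n ≤ (∏ i ∈ Finset.Ico m n, (1 - a i)) * s m + ∑ i ∈ Finset.Ico m n, c i := by
    intro m n hmn
    induction n with
    | zero =>
      interval_cases m
      simp
    | succ n ih =>
      rcases Nat.lt_or_ge m (n + 1) with h | h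
      · have hmn' : m ≤ n := Nat.lt_succ_iff.mp h
        have ihn := ih hmn'
        have hrn := hrec n
        have hP0 : 0 ≤ ∏ i ∈ Finset.Ico m n, (1 - a i) :=
          Finset.prod_nonneg fun i _ => (hfac i).1
        have hS0 : 0 ≤ ∑ i ∈ Finset.Ico m n, c i :=
          Finset.sum_nonneg fun i _ => hc i
        rw [Finset.prod_Ico_succ_top hmn', Finset.sum_Ico_succ_top hmn']
        have han := hfac n
        have hsn0 := hs n
        calc s (n+1) ≤ (1 - a n) * s n + c n := hrn
          _ ≤ (1 - a n) * ((∏ i ∈ Finset.Ico m n, (1 - a i)) * s m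
                + ∑ i ∈ Finset.Ico m n, c i) + c n := by
              nlinarith [mul_le_mul_of_nonneg_left ihn han.1]
          _ ≤ (∏ i ∈ Finset.Ico m n, (1 - a i)) * (1 - a n) * s m
                + (∑ i ∈ Finset.Ico m n, c i + c n) := by
              nlinarith [mul_nonneg hP0 hsn0]
      · have : m = n + 1 := le_antisymm hmn h
        subst this
        simp
  intro k n hn
  set m := χ (2 * k + 1) + 1 with hm
  set K := 2 * L * (k + 1) - 1 with hK
  obtain ⟨hA1, hA2⟩ := hA m K
  have hmn : m ≤ n := le_trans (le_trans (Nat.le_succ _) (Nat.succ_le_succ hA1)) hn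
  have hkey := key m n hmn
  -- bound the product
  have hprod : (∏ i ∈ Finset.Ico m n, (1 - a i)) ≤ 1 / (K + 1) := by
    have hsplit : Finset.Ico m n = Finset.Ico m (A m K + 1) ∪ Finset.Ico (A m K + 1) n := by
      rw [Finset.Ico_union_Ico_eq_Ico (le_trans hA1 (Nat.le_succ _)) hn]
    have hdisj : Disjoint (Finset.Ico m (A m K + 1)) (Finset.Ico (A m K + 1) n) :=
      Finset.Ico_disjoint_Ico_consecutive _ _ _
    rw [hsplit, Finset.prod_union hdisj]
    have h1 : (∏ i ∈ Finset.Ico m (A m K + 1), (1 - a i)) ≤ 1 / (K + 1) := by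
      rwa [Finset.Ico_add_one_right_eq_Icc]
    have h2 : (∏ i ∈ Finset.Ico (A m K + 1) n, (1 - a i)) ≤ 1 :=
      Finset.prod_le_one (fun i _ => (hfac i).1) (fun i _ => (hfac i).2)
    have h20 : 0 ≤ ∏ i ∈ Finset.Ico (A m K + 1) n, (1 - a i) :=
      Finset.prod_nonneg fun i _ => (hfac i).1
    have h10 : 0 ≤ ∏ i ∈ Finset.Ico m (A m K + 1), (1 - a i) :=
      Finset.prod_nonneg fun i _ => (hfac i).1
    nlinarith
  -- bound the sum
  have hsum : (∑ i ∈ Finset.Ico m n, c i) ≤ 1 / (2 * k + 1 + 1) := by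
    set χ0 := χ (2 * k + 1) with hχ0
    have hlt : χ0 + 1 < n := by omega
    have hl : 1 ≤ n - 1 - χ0 := by omega
    have heq : Finset.Ico m n = Finset.Icc (χ0 + 1) (χ0 + (n - 1 - χ0)) := by
      have hne : n = χ0 + (n - 1 - χ0) + 1 := by omega
      rw [hm, ← Finset.Ico_add_one_right_eq_Icc]
      conv_lhs => rw [hne]
    rw [heq]
    have := hχ (2 * k + 1) χ0 le_rfl (n - 1 - χ0) hl
    calc (∑ i ∈ Finset.Icc (χ0 + 1) (χ0 + (n - 1 - χ0)), c i)
        ≤ 1 / ((2 * k + 1 : ℕ) + 1) := this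
      _ = 1 / (2 * k + 1 + 1) := by push_cast; ring_nf
  -- combine
  have hK1 : ((K : ℝ) + 1) = 2 * L * (k + 1) := by
    have : K + 1 = 2 * L * (k + 1) := by
      rw [hK]
      exact Nat.sub_add_cancel (by nlinarith [hL])
    calc ((K : ℝ) + 1) = ((K + 1 : ℕ) : ℝ) := by push_cast; ring
      _ = ((2 * L * (k + 1) : ℕ) : ℝ) := by rw [this]
      _ = 2 * L * (k + 1) := by push_cast; ring
  have hP0 : 0 ≤ ∏ i ∈ Finset.Ico m n, (1 - a i) :=
    Finset.prod_nonneg fun i _ => (hfac i).1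
  have hL1 : (1:ℝ) ≤ L := by exact_mod_cast hL
  have hk1 : (0:ℝ) < (k:ℝ) + 1 := by positivity
  have hsmL : s m ≤ L := hLb m
  have hterm1 : (∏ i ∈ Finset.Ico m n, (1 - a i)) * s m ≤ 1 / (2 * ((k:ℝ) + 1)) := by
    have hKpos : (0:ℝ) < (K:ℝ) + 1 := by positivity
    have h1 : (∏ i ∈ Finset.Ico m n, (1 - a i)) * s m ≤ (1 / ((K:ℝ) + 1)) * L := by
      have := mul_le_mul hprod hsmL (hs m) (by positivity)
      linarith
    rw [hK1] at h1
    have h2 : (1 / (2 * (L:ℝ) * ((k:ℝ)+1))) * L = 1 / (2 * ((k:ℝ)+1)) := by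
      field_simp
    linarith [h1, h2.le]
  have hterm2 : (∑ i ∈ Finset.Ico m n, c i) ≤ 1 / (2 * ((k:ℝ) + 1)) := by
    have : (1:ℝ) / (2 * k + 1 + 1) = 1 / (2 * ((k:ℝ)+1)) := by ring_nf
    linarith [hsum, this.le]
  have : (1:ℝ) / (2 * ((k:ℝ)+1)) + 1 / (2 * ((k:ℝ)+1)) = 1 / ((k:ℝ)+1) := by
    field_simp
    norm_num
  linarith [hkey, hterm1, hterm2]
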